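/- Let n ≥ 2 and let A be an n×n 0-1 matrix of block form [[0_r, X],[0, P]] with P a permutation matrix of order n−r. Then f(A) = γ(n) if and only if X has all entries equal to 1, and r = (n−1)/2 when n is odd, while r ∈ {n/2, n/2 − 1} when n is even. -/

import Mathlib

open Matrix

/-- A 0-1 matrix over the integers. -/
def IsZeroOne {α β : Type*} (A : Matrix α β ℤ) : Prop :=
  ∀ i j, A i j = 0 ∨ A i j = 1

/-- A permutation matrix. -/
def IsPermMatrix {α : Type*} [DecidableEq α] (P : Matrix α α ℤ) : Prop :=
  ∃ σ : Equiv.Perm α, ∀ i j, P i j = if j = σ i then 1 else 0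

/-- The number of nonzero entries of a matrix. -/
def fcount {α β : Type*} [Fintype α] [Fintype β] (A : Matrix α β ℤ) : ℕ :=
  (Finset.univ.filter fun p : α × β => A p.1 p.2 ≠ 0).card

/-- γ(n) = (n+1)²/4 if n is odd and (n²+2n)/4 if n is even. -/
def gamma (n : ℕ) : ℕ := if Odd n then (n + 1) ^ 2 / 4 else (n ^ 2 + 2 * n) / 4

lemma fcount_eq_sum {α β : Type*} [Fintype α] [Fintype β] (A : Matrix α β ℤ) :
    fcount A = ∑ i, ∑ j, if A i j ≠ 0 then 1 else 0 := by
  rw [fcount, Finset.card_filter]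
  rw [Fintype.sum_prod_type]

lemma fcount_block {r m : ℕ} (X : Matrix (Fin r) (Fin m) ℤ)
    (P : Matrix (Fin m) (Fin m) ℤ) :
    fcount (Matrix.fromBlocks (0 : Matrix (Fin r) (Fin r) ℤ) X 0 P)
      = fcount X + fcount P := by
  rw [fcount_eq_sum, fcount_eq_sum, fcount_eq_sum]
  rw [Fintype.sum_sum_type]
  simp [Fintype.sum_sum_type, Matrix.fromBlocks]
  congr 1 <;> exact Finset.sum_congr rfl fun i _ => Finset.sum_congr rfl fun j _ => by
    split_ifs <;> simp_all

lemma fcount_perm {m : ℕ} (P : Matrix (Fin m) (Fin m) ℤ) (hP : IsPermMatrix P) :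
    fcount P = m := by
  obtain ⟨σ, hσ⟩ := hP
  rw [fcount_eq_sum]
  have : ∀ i : Fin m, (∑ j, if P i j ≠ 0 then (1:ℕ) else 0) = 1 := by
    intro i
    rw [Finset.sum_congr rfl (fun j _ => by rw [hσ])]
    simp
  rw [Finset.sum_congr rfl (fun i _ => this i)]
  simp

lemma fcount_le {r m : ℕ} (X : Matrix (Fin r) (Fin m) ℤ) : fcount X ≤ r * m := by
  calc fcount X ≤ (Finset.univ : Finset (Fin r × Fin m)).card := Finset.card_filter_le _ _
  _ = r * m := by simp

lemma fcount_X_eq_iff {r m : ℕ} (X : Matrix (Fin r) (Fin m) ℤ) (hX : IsZeroOne X) :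
    fcount X = r * m ↔ ∀ i j, X i j = 1 := by
  constructor
  · intro h i j
    have hcard : (Finset.univ.filter fun p : Fin r × Fin m => X p.1 p.2 ≠ 0).card
        = Fintype.card (Fin r × Fin m) := by
      simpa [fcount] using h
    have huniv := Finset.eq_univ_of_card _ hcard
    have : (i, j) ∈ Finset.univ.filter fun p : Fin r × Fin m => X p.1 p.2 ≠ 0 := by
      rw [huniv]; exact Finset.mem_univ _
    have hne : X i j ≠ 0 := (Finset.mem_filter.mp this).2
    rcases hX i j with h0 | h1
    · exact absurd h0 hne
    · exact h1
  · intro h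
    have : (Finset.univ.filter fun p : Fin r × Fin m => X p.1 p.2 ≠ 0) = Finset.univ := by
      apply Finset.filter_true_of_mem
      intro p _
      rw [h p.1 p.2]; norm_num
    rw [fcount, this]; simp

lemma gamma_key {r m n : ℕ} (hn : 2 ≤ n) (h : r + m = n) :
    (r + 1) * m ≤ gamma n ∧ ((r + 1) * m = gamma n ↔
      ((Odd n → r = (n - 1) / 2) ∧ (Even n → r = n / 2 ∨ r = n / 2 - 1))) := by
  rcases Nat.even_or_odd n with he | ho
  · obtain ⟨k, hk⟩ := he
    have hk' : n = 2 * k := by omega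
    subst hk'
    have hg : gamma (2 * k) = k * (k + 1) := by
      have : ¬ Odd (2 * k) := by simp [Nat.odd_iff]
      rw [gamma, if_neg this, show (2*k)^2 + 2*(2*k) = 4 * (k * (k+1)) by ring,
        Nat.mul_div_cancel_left _ (by norm_num)]
    have hk1 : 1 ≤ k := by omega
    have h4 : 4 * ((r + 1) * m) ≤ 4 * (k * (k + 1)) + 1 := by
      zify
      nlinarith [sq_nonneg ((r : ℤ) + 1 - m), (by push_cast; omega : (r : ℤ) + m = 2 * k)]
    constructor
    · rw [hg]; omega
    · rw [hg]
      constructor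
      · intro heq
        have hsq : ((r : ℤ) + 1 - m - 1) * ((r : ℤ) + 1 - m + 1) = 0 := by
          have hm : (r : ℤ) + m = 2 * k := by push_cast; omega
          have heq' : ((r : ℤ) + 1) * m = k * (k + 1) := by exact_mod_cast congrArg (Nat.cast : ℕ → ℤ) heq
          nlinarith
        rcases mul_eq_zero.mp hsq with h1 | h2
        · refine ⟨fun hodd => ?_, fun _ => ?_⟩
          · exact absurd hodd (by simp [Nat.odd_iff])
          · left; omega
        · refine ⟨fun hodd => ?_, fun _ => ?_⟩
          · exact absurd hodd (by simp [Nat.odd_iff])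
          · right; omega
      · rintro ⟨-, hev⟩
        rcases hev ⟨k, by ring⟩ with hr | hr
        · have hr' : r = k := by omega
          have hm : m = k := by omega
          subst hr' hm; ring
        · have hr' : r = k - 1 := by omega
          have hm : m = k + 1 := by omega
          subst hm
          have : r + 1 = k := by omega
          rw [this]
  · obtain ⟨k, hk⟩ := ho
    subst hk
    have hodd : Odd (2 * k + 1) := ⟨k, by ring⟩
    have hg : gamma (2 * k + 1) = (k + 1) * (k + 1) := by
      rw [gamma, if_pos hodd, show (2*k+1+1)^2 = 4 * ((k+1)*(k+1)) by ring,
        Nat.mul_div_cancel_left _ (by norm_num)]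
    have hle : (r + 1) * m ≤ (k + 1) * (k + 1) := by
      zify
      nlinarith [sq_nonneg ((r : ℤ) + 1 - m), (by push_cast; omega : (r : ℤ) + m = 2 * k + 1)]
    constructor
    · rw [hg]; exact hle
    · rw [hg]
      constructor
      · intro heq
        have hsq : ((r : ℤ) + 1 - m) ^ 2 = 0 := by
          have hm : (r : ℤ) + m = 2 * k + 1 := by push_cast; omega
          have heq' : ((r : ℤ) + 1) * m = (k + 1) * (k + 1) := by exact_mod_cast congrArg (Nat.cast : ℕ → ℤ) heq
          nlinarith
        have : (r : ℤ) + 1 - m = 0 := by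
          exact pow_eq_zero_iff (by norm_num) |>.mp hsq
        refine ⟨fun _ => by omega, fun hev => absurd hev (by simp [Nat.even_iff])⟩
      · rintro ⟨hod, -⟩
        have hr : r = k := by have := hod hodd; omega
        have hm : m = k + 1 := by omega
        subst hr hm; ring

theorem stmt10 {n r m : ℕ} (hn : 2 ≤ n) (hrm : r + m = n)
    (P : Matrix (Fin m) (Fin m) ℤ) (hP : IsPermMatrix P)
    (X : Matrix (Fin r) (Fin m) ℤ) (hX : IsZeroOne X) :
    fcount (Matrix.fromBlocks (0 : Matrix (Fin r) (Fin r) ℤ) X 0 P) = gamma n ↔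
      (∀ i j, X i j = 1) ∧
      (Odd n → r = (n - 1) / 2) ∧
      (Even n → r = n / 2 ∨ r = n / 2 - 1) := by
  rw [fcount_block, fcount_perm P hP]
  obtain ⟨hle, hiff⟩ := gamma_key hn hrm
  have hXle := fcount_le X
  have hXiff := fcount_X_eq_iff X hX
  have hexp : (r + 1) * m = r * m + m := by ring
  constructor
  · intro h
    have h1 : fcount X = r * m := by omega
    have h2 : (r + 1) * m = gamma n := by omega
    exact ⟨hXiff.mp h1, (hiff.mp h2).1, (hiff.mp h2).2⟩
  · rintro ⟨hall, hod, hev⟩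
    have h1 : fcount X = r * m := hXiff.mpr hall
    have h2 : (r + 1) * m = gamma n := hiff.mpr ⟨hod, hev⟩
    omega
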